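/- Let (A_k)_{k=1,…,K} be a partition of Q into nonempty sets and suppose ν(C) = Σ_{k=1}^K ν_k(C ∩ A_k) for all C ⊆ Q, where each ν_k is a real-valued function on subsets of Q. Then for every single permutation π of (1,…,q) (without pairing) and every 1 ≤ k ≤ K, the group sum of marginal contributions telescopes: Σ_{j ∈ A_k} (ν(C_{π,j} ∪ {j}) − ν(C_{π,j})) = ν_k(A_k) − ν_k(∅). -/

import Mathlib

open Finset

/-- Shapley value of player `j` for value function `ν` on coalitions of `Fin q`. -/
noncomputable def shapley {q : ℕ} (ν : Finset (Fin q) → ℝ) (j : Fin q) : ℝ :=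
  ((q : ℝ))⁻¹ * ∑ C ∈ (Finset.univ.erase j).powerset,
    (((q - 1).choose C.card : ℝ))⁻¹ * (ν (insert j C) - ν C)

/-- The coalition `C_{π,j}` of players preceding `j` in the permutation `π`,
where `π i` is the player at position `i`. -/
def preceding {q : ℕ} (π : Equiv.Perm (Fin q)) (j : Fin q) : Finset (Fin q) :=
  (Finset.univ.filter (fun i : Fin q => i < π.symm j)).image π

/-- The reversed permutation `ρ(π) = (π_q, …, π_1)`. -/
def reversedPerm {q : ℕ} (π : Equiv.Perm (Fin q)) : Equiv.Perm (Fin q) :=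
  Fin.revPerm.trans π

lemma mem_preceding {q : ℕ} (π : Equiv.Perm (Fin q)) (j x : Fin q) :
    x ∈ preceding π j ↔ π.symm x < π.symm j := by
  simp only [preceding, Finset.mem_image, Finset.mem_filter, Finset.mem_univ, true_and]
  constructor
  · rintro ⟨i, hi, rfl⟩; simpa using hi
  · intro h; exact ⟨π.symm x, h, π.apply_symm_apply x⟩

/-- telescoping of the group sum of marginal contributions for a
single permutation under an additive decomposition of the value function. -/
theorem single_permutation_group_telescope (q K : ℕ) (hq : 1 ≤ q)
    (𝒜 : Fin K → Finset (Fin q))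
    (hne : ∀ k, (𝒜 k).Nonempty)
    (hdisj : ∀ k l, k ≠ l → Disjoint (𝒜 k) (𝒜 l))
    (hcover : Finset.univ.biUnion 𝒜 = (Finset.univ : Finset (Fin q)))
    (ν : Finset (Fin q) → ℝ) (νk : Fin K → Finset (Fin q) → ℝ)
    (hν : ∀ C : Finset (Fin q), ν C = ∑ k, νk k (C ∩ 𝒜 k))
    (π : Equiv.Perm (Fin q)) (k : Fin K) :
    ∑ j ∈ 𝒜 k, (ν (insert j (preceding π j)) - ν (preceding π j))
      = νk k (𝒜 k) - νk k ∅ := by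
  classical
  set h : ℕ → ℝ := fun t => νk k ((𝒜 k).filter fun i => (π.symm i : ℕ) < t) with hh
  have key : ∀ j ∈ 𝒜 k,
      ν (insert j (preceding π j)) - ν (preceding π j)
        = h ((π.symm j : ℕ) + 1) - h (π.symm j : ℕ) := by
    intro j hj
    rw [hν, hν, ← Finset.sum_sub_distrib, Finset.sum_eq_single k]
    · have h1 : insert j (preceding π j) ∩ 𝒜 k
          = (𝒜 k).filter fun i => (π.symm i : ℕ) < (π.symm j : ℕ) + 1 := by
        ext x
        simp only [Finset.mem_inter, Finset.mem_insert, Finset.mem_filter,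
          mem_preceding, Fin.lt_iff_val_lt_val, Nat.lt_succ_iff]
        constructor
        · rintro ⟨hx | hx, hxk⟩
          · subst hx; exact ⟨hxk, le_rfl⟩
          · exact ⟨hxk, hx.le⟩
        · rintro ⟨hxk, hx⟩
          rcases hx.lt_or_eq with hx | hx
          · exact ⟨Or.inr hx, hxk⟩
          · exact ⟨Or.inl (π.symm.injective (Fin.ext hx)), hxk⟩
      have h2 : preceding π j ∩ 𝒜 k
          = (𝒜 k).filter fun i => (π.symm i : ℕ) < (π.symm j : ℕ) := by
        ext x
        simp only [Finset.mem_inter, Finset.mem_filter, mem_preceding,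
          Fin.lt_iff_val_lt_val]
        tauto
      simp [hh, h1, h2]
    · intro l _ hl
      have hjl : j ∉ 𝒜 l := fun hjl =>
        (Finset.disjoint_left.mp (hdisj l k hl) hjl) hj
      rw [Finset.insert_inter_of_notMem hjl]
      ring
    · simp
  rw [Finset.sum_congr rfl key]
  have himg : ∑ j ∈ 𝒜 k, (h ((π.symm j : ℕ) + 1) - h (π.symm j : ℕ))
      = ∑ t ∈ (𝒜 k).image (fun j => (π.symm j : ℕ)), (h (t + 1) - h t) := by
    rw [Finset.sum_image]
    intro a _ b _ hab
    exact π.symm.injective (Fin.ext hab)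
  rw [himg]
  have hsub : (𝒜 k).image (fun j => (π.symm j : ℕ)) ⊆ Finset.range q := by
    intro t ht
    simp only [Finset.mem_image] at ht
    obtain ⟨j, _, rfl⟩ := ht
    exact Finset.mem_range.mpr (π.symm j).isLt
  rw [Finset.sum_subset hsub]
  · rw [Finset.sum_range_sub h]
    congr 1
    · simp only [hh]
      congr 1
      exact Finset.filter_true_of_mem fun i _ => (π.symm i).isLt
    · simp [hh]
  · intro t ht hnt
    have heq : (𝒜 k).filter (fun i => (π.symm i : ℕ) < t + 1)
        = (𝒜 k).filter fun i => (π.symm i : ℕ) < t := by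
      ext x
      simp only [Finset.mem_filter, Nat.lt_succ_iff]
      constructor
      · rintro ⟨hxk, hx⟩
        refine ⟨hxk, lt_of_le_of_ne hx ?_⟩
        rintro rfl
        exact hnt (Finset.mem_image.mpr ⟨x, hxk, rfl⟩)
      · rintro ⟨hxk, hx⟩; exact ⟨hxk, hx.le⟩
    simp only [hh, heq, sub_self]
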